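/- Fix an integer k ≥ 1 and α ∈ (−1/k, −1/(k+1)), and set p = p(n) = n^α (real power). Then Var_{μ_{n,p}}[f_{n,k}] = Θ( n^{2k} · p^{2·C(k+1,2) − 1} ) as n → ∞; that is, there exist constants c > 0, Cst > 0 and N ∈ ℕ such that for all n ≥ N, c · n^{2k} · p^{2·C(k+1,2) − 1} ≤ Var_{μ_{n,p}}[f_{n,k}] ≤ Cst · n^{2k} · p^{2·C(k+1,2) − 1}. -/

import Mathlib

open Finset MeasureTheory Filter Real

noncomputable section

open scoped Classical
set_option maxHeartbeats 1000000

/-- The edge set `E_n`: unordered pairs of distinct elements of `[n]`. -/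
abbrev Edge (n : ℕ) := {e : Sym2 (Fin n) // ¬ e.IsDiag}

/-- An edge configuration on `[n]`. -/
abbrev Config (n : ℕ) := Edge n → Bool

/-- Bernoulli(p) weight of a state. -/
def bern (p : ℝ) (b : Bool) : ℝ := if b then p else 1 - p

/-- Weight of a configuration under the static Erdős–Rényi measure `μ_{n,p}`. -/
def staticWeight (n : ℕ) (p : ℝ) (ω : Config n) : ℝ := ∏ e : Edge n, bern p (ω e)

/-- Expectation under the static Erdős–Rényi measure `μ_{n,p}`. -/
def staticExp (n : ℕ) (p : ℝ) (f : Config n → ℝ) : ℝ :=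
  ∑ ω : Config n, staticWeight n p ω * f ω

/-- Variance under the static Erdős–Rényi measure `μ_{n,p}`. -/
def staticVar (n : ℕ) (p : ℝ) (f : Config n → ℝ) : ℝ :=
  staticExp n p (fun ω => (f ω - staticExp n p f) ^ 2)

/-- `A` is a clique of the graph `G(ω)`: every pair of distinct elements of `A`
is an edge of `G(ω)`. -/
def IsCliqueOf {n : ℕ} (A : Finset (Fin n)) (ω : Config n) : Prop :=
  ∀ e : Edge n, e.1 ∈ A.sym2 → ω e = true

/-- The clique count `f_{n,j}(ω)`: the number of `(j+1)`-element subsets of `[n]`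
all of whose pairs are edges of `G(ω)`. -/
def cliqueCount (n j : ℕ) (ω : Config n) : ℕ :=
  ((Finset.powersetCard (j + 1) (Finset.univ : Finset (Fin n))).filter
    (fun A => IsCliqueOf A ω)).card

/-- Real-valued clique count. -/
def cliqueCountR (n j : ℕ) (ω : Config n) : ℝ := (cliqueCount n j ω : ℝ)

/-- The Euler characteristic `χ_n(ω) = Σ_{j=0}^{n-1} (-1)^j f_{n,j}(ω)`. -/
def eulerChar (n : ℕ) (ω : Config n) : ℝ :=
  ∑ j ∈ Finset.range n, (-1 : ℝ) ^ j * cliqueCountR n j ω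

/-- Transition probability of the stationary on/off Markov chain with invariant
law Bernoulli(p) over a time increment `s`. -/
def transP (lam p s : ℝ) (b b' : Bool) : ℝ :=
  if b then (if b' then p + (1 - p) * Real.exp (-lam * s)
             else (1 - p) * (1 - Real.exp (-lam * s)))
  else (if b' then p * (1 - Real.exp (-lam * s))
        else (1 - p) + p * Real.exp (-lam * s))

/-- Weight of a trajectory of the stationary on/off Markov chain observed at the
times `t 0 ≤ t 1 ≤ …`. -/
def pathWeight (lam p : ℝ) {m : ℕ} (t : Fin m → ℝ) (b : Fin m → Bool) : ℝ :=
  ∏ i : Fin m,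
    if (i : ℕ) = 0 then bern p (b i)
    else transP lam p (t i - t ⟨(i : ℕ) - 1, lt_of_le_of_lt (Nat.sub_le _ _) i.isLt⟩)
      (b ⟨(i : ℕ) - 1, lt_of_le_of_lt (Nat.sub_le _ _) i.isLt⟩) (b i)

/-- Weight of an `m`-tuple of edge configurations under the `m`-time dynamic
Erdős–Rényi measure `μ_{n,p}^{(t 0, …, t (m-1))}`. -/
def dynWeight (lam p : ℝ) (n : ℕ) {m : ℕ} (t : Fin m → ℝ) (ω : Fin m → Config n) : ℝ :=
  ∏ e : Edge n, pathWeight lam p t (fun i => ω i e)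

/-- Expectation under the `m`-time dynamic Erdős–Rényi measure. -/
def dynExp (lam p : ℝ) (n : ℕ) {m : ℕ} (t : Fin m → ℝ) (F : (Fin m → Config n) → ℝ) : ℝ :=
  ∑ ω : Fin m → Config n, dynWeight lam p n t ω * F ω

/-- The normalized clique count `f̄_{n,k}` (under the measure `μ_{n,p}`). -/
def fbar (n k : ℕ) (p : ℝ) (ω : Config n) : ℝ :=
  (cliqueCountR n k ω - staticExp n p (cliqueCountR n k)) /
    Real.sqrt (staticVar n p (cliqueCountR n k))

/-- The normalized Euler characteristic `χ̄_n` (under the measure `μ_{n,p}`). -/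
def chibar (n : ℕ) (p : ℝ) (ω : Config n) : ℝ :=
  (eulerChar n ω - staticExp n p (eulerChar n)) /
    Real.sqrt (staticVar n p (eulerChar n))

/-- The clique indicator `1_A(ω)` as a real number. -/
def cliqueInd {n : ℕ} (A : Finset (Fin n)) (ω : Config n) : ℝ :=
  if IsCliqueOf A ω then 1 else 0

/-- A quadruple of subsets has an independent set if one of them shares at most
one vertex with each of the others. -/
def HasIndepSet {n : ℕ} (A : Fin 4 → Finset (Fin n)) : Prop :=
  ∃ q : Fin 4, ∀ r : Fin 4, r ≠ q → ((A q) ∩ (A r)).card ≤ 1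

/-- The quantity `g(h; Ā)` built from clique indicators at three times. -/
def gQuad {n : ℕ} (A : Fin 4 → Finset (Fin n)) (ω : Fin 3 → Config n) : ℝ :=
  (cliqueInd (A 0) (ω 2) - cliqueInd (A 0) (ω 1)) *
  (cliqueInd (A 1) (ω 2) - cliqueInd (A 1) (ω 1)) *
  (cliqueInd (A 2) (ω 1) - cliqueInd (A 2) (ω 0)) *
  (cliqueInd (A 3) (ω 1) - cliqueInd (A 3) (ω 0))

/-- `ver(Ā)`: inclusion–exclusion count of vertices. -/
def verA {n : ℕ} (A : Fin 4 → Finset (Fin n)) : ℤ :=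
  (∑ q : Fin 4, ((A q).card : ℤ))
  - (∑ q : Fin 4, ∑ r : Fin 4, if q < r then (((A q) ∩ (A r)).card : ℤ) else 0)
  + (∑ q : Fin 4, ∑ r : Fin 4, ∑ s : Fin 4,
      if q < r ∧ r < s then (((A q) ∩ (A r) ∩ (A s)).card : ℤ) else 0)
  - ((A 0 ∩ A 1 ∩ A 2 ∩ A 3).card : ℤ)

/-- `pair(Ā)`: inclusion–exclusion count of potential edges. -/
def pairA {n : ℕ} (A : Fin 4 → Finset (Fin n)) : ℤ :=
  (∑ q : Fin 4, (Nat.choose (A q).card 2 : ℤ))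
  - (∑ q : Fin 4, ∑ r : Fin 4, if q < r then (Nat.choose ((A q) ∩ (A r)).card 2 : ℤ) else 0)
  + (∑ q : Fin 4, ∑ r : Fin 4, ∑ s : Fin 4,
      if q < r ∧ r < s then (Nat.choose ((A q) ∩ (A r) ∩ (A s)).card 2 : ℤ) else 0)
  - (Nat.choose (A 0 ∩ A 1 ∩ A 2 ∩ A 3).card 2 : ℤ)

lemma staticExp_prod_ind (n : ℕ) (p : ℝ) (S : Finset (Edge n)) :
    staticExp n p (fun ω => ∏ e ∈ S, (if ω e = true then (1:ℝ) else 0)) = p ^ S.card := by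
  unfold staticExp staticWeight
  have h1 : ∀ ω : Config n,
      (∏ e : Edge n, bern p (ω e)) * ∏ e ∈ S, (if ω e = true then (1:ℝ) else 0)
      = ∏ e : Edge n, (bern p (ω e) * if e ∈ S then (if ω e = true then (1:ℝ) else 0) else 1) := by
    intro ω
    rw [Finset.prod_mul_distrib, Fintype.prod_extend_by_one]
  simp_rw [h1]
  rw [show (∑ x : Config n,
        ∏ e : Edge n, (bern p (x e) * if e ∈ S then (if x e = true then (1:ℝ) else 0) else 1))
      = ∏ e : Edge n, ∑ b : Bool,
          (bern p b * if e ∈ S then (if b = true then (1:ℝ) else 0) else 1) from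
    (Fintype.prod_sum (fun e b => bern p b * if e ∈ S then (if b = true then (1:ℝ) else 0) else 1)).symm]
  have h2 : ∀ e : Edge n,
      (∑ b : Bool, (bern p b * if e ∈ S then (if b = true then (1:ℝ) else 0) else 1))
      = if e ∈ S then p else 1 := by
    intro e; by_cases he : e ∈ S <;> simp [he, bern] <;> ring
  simp_rw [h2]
  rw [Fintype.prod_extend_by_one, Finset.prod_const]

lemma staticExp_one (n : ℕ) (p : ℝ) : staticExp n p (fun _ => (1:ℝ)) = 1 := by
  have := staticExp_prod_ind n p ∅
  simpa using this

def edgeSet {n : ℕ} (A : Finset (Fin n)) : Finset (Edge n) :=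
  Finset.univ.filter (fun e : Edge n => e.1 ∈ A.sym2)

lemma isCliqueOf_iff {n : ℕ} (A : Finset (Fin n)) (ω : Config n) :
    IsCliqueOf A ω ↔ ∀ e ∈ edgeSet A, ω e = true := by
  unfold IsCliqueOf edgeSet
  simp [Finset.mem_filter]

lemma cliqueInd_mul {n : ℕ} (A B : Finset (Fin n)) (ω : Config n) :
    cliqueInd A ω * cliqueInd B ω
      = ∏ e ∈ edgeSet A ∪ edgeSet B, (if ω e = true then (1:ℝ) else 0) := by
  rw [Finset.prod_boole]
  unfold cliqueInd
  have hiff : (∀ i ∈ edgeSet A ∪ edgeSet B, ω i = true) ↔ IsCliqueOf A ω ∧ IsCliqueOf B ω := by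
    rw [isCliqueOf_iff A, isCliqueOf_iff B]
    constructor
    · intro h
      exact ⟨fun e he => h e (Finset.mem_union_left _ he),
             fun e he => h e (Finset.mem_union_right _ he)⟩
    · rintro ⟨h1, h2⟩ e he
      rcases Finset.mem_union.1 he with h | h
      exacts [h1 e h, h2 e h]
  by_cases hA : IsCliqueOf A ω <;> by_cases hB : IsCliqueOf B ω
  · rw [if_pos hA, if_pos hB, if_pos (hiff.2 ⟨hA, hB⟩), one_mul]
  · rw [if_pos hA, if_neg hB, if_neg (fun h => hB (hiff.1 h).2), mul_zero]
  · rw [if_neg hA, if_pos hB, if_neg (fun h => hA (hiff.1 h).1), zero_mul]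
  · rw [if_neg hA, if_neg hB, if_neg (fun h => hA (hiff.1 h).1), mul_zero]

lemma cliqueInd_sq {n : ℕ} (A : Finset (Fin n)) (ω : Config n) :
    cliqueInd A ω = ∏ e ∈ edgeSet A, (if ω e = true then (1:ℝ) else 0) := by
  have := cliqueInd_mul A A ω
  rw [Finset.union_self] at this
  unfold cliqueInd at this ⊢
  by_cases h : IsCliqueOf A ω
  · rw [if_pos h] at this ⊢
    nlinarith [this]
  · rw [if_neg h] at this ⊢
    linarith [this]

lemma staticExp_cliqueInd_mul (n : ℕ) (p : ℝ) (A B : Finset (Fin n)) :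
    staticExp n p (fun ω => cliqueInd A ω * cliqueInd B ω)
      = p ^ (edgeSet A ∪ edgeSet B).card := by
  simp_rw [cliqueInd_mul]
  exact staticExp_prod_ind n p _

lemma staticExp_cliqueInd (n : ℕ) (p : ℝ) (A : Finset (Fin n)) :
    staticExp n p (cliqueInd A) = p ^ (edgeSet A).card := by
  rw [show cliqueInd A = fun ω => ∏ e ∈ edgeSet A, (if ω e = true then (1:ℝ) else 0) from
    funext (cliqueInd_sq A)]
  exact staticExp_prod_ind n p _

lemma staticExp_sum (n : ℕ) (p : ℝ) {ι : Type*} (s : Finset ι) (g : ι → Config n → ℝ) :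
    staticExp n p (fun ω => ∑ i ∈ s, g i ω) = ∑ i ∈ s, staticExp n p (g i) := by
  unfold staticExp
  simp_rw [Finset.mul_sum]
  rw [Finset.sum_comm]

lemma staticVar_eq (n : ℕ) (p : ℝ) (f : Config n → ℝ) :
    staticVar n p f
      = staticExp n p (fun ω => f ω * f ω) - staticExp n p f * staticExp n p f := by
  unfold staticVar
  set c := staticExp n p f with hc
  have hw : ∑ ω : Config n, staticWeight n p ω = 1 := by
    simpa [staticExp] using staticExp_one n p
  unfold staticExp
  have h : ∀ ω : Config n, staticWeight n p ω * (f ω - c) ^ 2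
      = staticWeight n p ω * (f ω * f ω) - 2 * c * (staticWeight n p ω * f ω)
        + c * c * staticWeight n p ω := by
    intro ω; ring
  simp_rw [h]
  rw [Finset.sum_add_distrib, Finset.sum_sub_distrib, ← Finset.mul_sum, ← Finset.mul_sum, hw]
  have : (∑ ω : Config n, staticWeight n p ω * f ω) = c := rfl
  rw [this]
  ring

lemma edgeSet_card {n : ℕ} (A : Finset (Fin n)) : (edgeSet A).card = Nat.choose A.card 2 := by
  have h1 : edgeSet A = A.sym2.subtype (fun e => ¬ e.IsDiag) := by
    ext e
    simp [edgeSet, Finset.mem_subtype]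
  rw [h1, Finset.card_subtype]
  have hdiag : A.sym2.filter (fun e => e.IsDiag) = A.image Sym2.diag := by
    ext e
    induction e using Sym2.ind with
    | _ x y =>
      simp only [Finset.mem_filter, Finset.mem_image, Finset.mk_mem_sym2_iff, Sym2.mk_isDiag_iff]
      constructor
      · rintro ⟨⟨hx, hy⟩, rfl⟩
        exact ⟨x, hx, rfl⟩
      · rintro ⟨z, hz, h⟩
        have := Sym2.eq_iff.1 (by simpa [Sym2.diag] using h)
        rcases this with ⟨rfl, rfl⟩ | ⟨rfl, rfl⟩ <;> exact ⟨⟨hz, hz⟩, rfl⟩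
  have hcard : (A.sym2.filter (fun e => e.IsDiag)).card = A.card := by
    rw [hdiag, Finset.card_image_of_injective _ Sym2.diag_injective]
  have hsum := Finset.card_filter_add_card_filter_not
    (s := A.sym2) (p := fun e => e.IsDiag)
  rw [Finset.card_sym2] at hsum
  have hch : Nat.choose (A.card + 1) 2 = A.card + Nat.choose A.card 2 := by
    rw [Nat.choose_succ_succ]
    simp [Nat.choose_one_right]
  omega

lemma edgeSet_inter {n : ℕ} (A B : Finset (Fin n)) :
    edgeSet A ∩ edgeSet B = edgeSet (A ∩ B) := by
  ext e
  simp only [edgeSet, Finset.mem_inter, Finset.mem_filter, Finset.mem_univ, true_and,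
    Finset.mem_sym2_iff]
  aesop

lemma edgeSet_union_card {n k : ℕ} {A B : Finset (Fin n)} (hA : A.card = k+1) (hB : B.card = k+1) :
    (edgeSet A ∪ edgeSet B).card = 2 * Nat.choose (k+1) 2 - Nat.choose (A ∩ B).card 2 := by
  have h := Finset.card_union_add_card_inter (edgeSet A) (edgeSet B)
  rw [edgeSet_inter, edgeSet_card, edgeSet_card, edgeSet_card, hA, hB] at h
  have hle : Nat.choose (A ∩ B).card 2 ≤ Nat.choose (k+1) 2 :=
    Nat.choose_le_choose 2 (by rw [← hA]; exact Finset.card_le_card Finset.inter_subset_left)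
  omega

lemma cliqueCountR_eq_sum (n k : ℕ) (ω : Config n) :
    cliqueCountR n k ω
      = ∑ A ∈ Finset.powersetCard (k+1) (Finset.univ : Finset (Fin n)), cliqueInd A ω := by
  unfold cliqueCountR cliqueCount cliqueInd
  rw [Finset.card_filter]
  push_cast
  rfl

lemma staticVar_cliqueCount (n k : ℕ) (p : ℝ) :
    staticVar n p (cliqueCountR n k)
      = ∑ A ∈ Finset.powersetCard (k+1) (Finset.univ : Finset (Fin n)),
          ∑ B ∈ Finset.powersetCard (k+1) (Finset.univ : Finset (Fin n)),
            (p ^ (2 * Nat.choose (k+1) 2 - Nat.choose ((A ∩ B).card) 2)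
              - p ^ (Nat.choose (k+1) 2) * p ^ (Nat.choose (k+1) 2)) := by
  set P := Finset.powersetCard (k+1) (Finset.univ : Finset (Fin n)) with hP
  have hf : cliqueCountR n k = fun ω => ∑ A ∈ P, cliqueInd A ω :=
    funext (cliqueCountR_eq_sum n k)
  rw [hf, staticVar_eq]
  have h2 : staticExp n p (fun ω => (∑ A ∈ P, cliqueInd A ω) * (∑ B ∈ P, cliqueInd B ω))
      = ∑ A ∈ P, ∑ B ∈ P, p ^ (edgeSet A ∪ edgeSet B).card := by
    simp_rw [Finset.sum_mul_sum]
    rw [staticExp_sum]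
    refine Finset.sum_congr rfl fun A _ => ?_
    rw [staticExp_sum]
    exact Finset.sum_congr rfl fun B _ => staticExp_cliqueInd_mul n p A B
  have h1 : staticExp n p (fun ω => ∑ A ∈ P, cliqueInd A ω)
      = ∑ A ∈ P, p ^ (edgeSet A).card := by
    rw [staticExp_sum]
    exact Finset.sum_congr rfl fun A _ => staticExp_cliqueInd n p A
  rw [h2, h1, Finset.sum_mul_sum, ← Finset.sum_sub_distrib]
  refine Finset.sum_congr rfl fun A hA => ?_
  rw [← Finset.sum_sub_distrib]
  refine Finset.sum_congr rfl fun B hB => ?_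
  have hAc : A.card = k + 1 := (Finset.mem_powersetCard_univ.1 hA)
  have hBc : B.card = k + 1 := (Finset.mem_powersetCard_univ.1 hB)
  rw [edgeSet_union_card hAc hBc, edgeSet_card, edgeSet_card, hAc, hBc]

lemma card_interval (n a b : ℕ) (hb : b ≤ n) :
    ((Finset.univ : Finset (Fin n)).filter (fun i => a ≤ i.val ∧ i.val < b)).card = b - a := by
  rw [← Nat.card_Ico a b]
  refine Finset.card_bij (fun i _ => i.val) ?_ ?_ ?_
  · intro i hi; simp at hi ⊢; omega
  · intro i _ j _ h; exact Fin.ext h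
  · intro m hm
    simp only [Finset.mem_Ico] at hm
    exact ⟨⟨m, lt_of_lt_of_le hm.2 hb⟩, by simp; omega, rfl⟩

lemma count_pairs_lower (n k : ℕ) (hk : 1 ≤ k) :
    Nat.choose (n/3) 2 * Nat.choose (n/3) (k-1) * Nat.choose (n/3) (k-1)
      ≤ (((Finset.powersetCard (k+1) (Finset.univ : Finset (Fin n))) ×ˢ
          (Finset.powersetCard (k+1) (Finset.univ : Finset (Fin n)))).filter
          (fun AB => (AB.1 ∩ AB.2).card = 2)).card := by
  set q := n / 3 with hq
  have h3q : 3 * q ≤ n := by omega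
  set U1 := (Finset.univ : Finset (Fin n)).filter (fun i => 0 ≤ i.val ∧ i.val < q) with hU1
  set U2 := (Finset.univ : Finset (Fin n)).filter (fun i => q ≤ i.val ∧ i.val < 2*q) with hU2
  set U3 := (Finset.univ : Finset (Fin n)).filter (fun i => 2*q ≤ i.val ∧ i.val < 3*q) with hU3
  have hc1 : U1.card = q := by rw [hU1, card_interval n 0 q (by omega)]; omega
  have hc2 : U2.card = q := by rw [hU2, card_interval n q (2*q) (by omega)]; omega
  have hc3 : U3.card = q := by rw [hU3, card_interval n (2*q) (3*q) (by omega)]; omega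
  have hd12 : Disjoint U1 U2 := by
    rw [Finset.disjoint_left]; intro a h1 h2
    rw [hU1, Finset.mem_filter] at h1; rw [hU2, Finset.mem_filter] at h2; omega
  have hd13 : Disjoint U1 U3 := by
    rw [Finset.disjoint_left]; intro a h1 h2
    rw [hU1, Finset.mem_filter] at h1; rw [hU3, Finset.mem_filter] at h2; omega
  have hd23 : Disjoint U2 U3 := by
    rw [Finset.disjoint_left]; intro a h1 h2
    rw [hU2, Finset.mem_filter] at h1; rw [hU3, Finset.mem_filter] at h2; omega
  set D := (Finset.powersetCard 2 U1) ×ˢ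
      ((Finset.powersetCard (k-1) U2) ×ˢ (Finset.powersetCard (k-1) U3)) with hD
  have hcardD : D.card = Nat.choose q 2 * Nat.choose (n/3) (k-1) * Nat.choose (n/3) (k-1) := by
    rw [hD, Finset.card_product, Finset.card_product,
      Finset.card_powersetCard, Finset.card_powersetCard, Finset.card_powersetCard,
      hc1, hc2, hc3, ← hq]
    ring
  rw [← hcardD]
  refine Finset.card_le_card_of_injOn (fun x => (x.1 ∪ x.2.1, x.1 ∪ x.2.2)) ?_ ?_
  · rintro ⟨P2, A', B'⟩ hx
    rw [hD] at hx
    simp only [Finset.mem_coe, Finset.mem_product, Finset.mem_powersetCard] at hx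
    obtain ⟨⟨hP2s, hP2c⟩, ⟨hA's, hA'c⟩, ⟨hB's, hB'c⟩⟩ := hx
    have hdPA : Disjoint P2 A' := hd12.mono hP2s hA's
    have hdPB : Disjoint P2 B' := hd13.mono hP2s hB's
    have hdAB : Disjoint A' B' := hd23.mono hA's hB's
    have hint : (P2 ∪ A') ∩ (P2 ∪ B') = P2 := by
      ext a
      simp only [Finset.mem_inter, Finset.mem_union]
      constructor
      · rintro ⟨h1 | h1, h2 | h2⟩
        · exact h1
        · exact h1
        · exact h2
        · exact absurd h2 (Finset.disjoint_left.1 hdAB h1)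
      · intro h; exact ⟨Or.inl h, Or.inl h⟩
    simp only [Finset.mem_coe, Finset.mem_filter, Finset.mem_product, Finset.mem_powersetCard]
    refine ⟨⟨⟨Finset.subset_univ _, ?_⟩, ⟨Finset.subset_univ _, ?_⟩⟩, ?_⟩
    · rw [Finset.card_union_of_disjoint hdPA, hP2c, hA'c]; omega
    · rw [Finset.card_union_of_disjoint hdPB, hP2c, hB'c]; omega
    · rw [hint, hP2c]
  · rintro ⟨P2, A', B'⟩ hx ⟨Q2, C', D'⟩ hy hxy
    rw [hD] at hx hy
    simp only [Finset.mem_coe, Finset.mem_product, Finset.mem_powersetCard] at hx hy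
    obtain ⟨⟨hP2s, _⟩, ⟨hA's, _⟩, ⟨hB's, _⟩⟩ := hx
    obtain ⟨⟨hQ2s, _⟩, ⟨hC's, _⟩, ⟨hD's, _⟩⟩ := hy
    simp only [Prod.mk.injEq] at hxy
    obtain ⟨h1, h2⟩ := hxy
    have hint : ∀ (P A B : Finset (Fin n)), P ⊆ U1 → A ⊆ U2 → B ⊆ U3 →
        (P ∪ A) ∩ (P ∪ B) = P := by
      intro P A B hP hA hB
      ext a
      simp only [Finset.mem_inter, Finset.mem_union]
      constructor
      · rintro ⟨hh1 | hh1, hh2 | hh2⟩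
        · exact hh1
        · exact hh1
        · exact hh2
        · exact absurd hh2 (Finset.disjoint_left.1 (hd23.mono hA hB) hh1)
      · intro h; exact ⟨Or.inl h, Or.inl h⟩
    have hPQ : P2 = Q2 := by
      have e1 := hint P2 A' B' hP2s hA's hB's
      have e2 := hint Q2 C' D' hQ2s hC's hD's
      rw [← e1, ← e2, h1, h2]
    have hAC : A' = C' := by
      have e1 : (P2 ∪ A') \ P2 = A' :=
        Finset.union_sdiff_cancel_left (hd12.mono hP2s hA's)
      have e2 : (Q2 ∪ C') \ Q2 = C' :=
        Finset.union_sdiff_cancel_left (hd12.mono hQ2s hC's)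
      rw [← e1, ← e2, h1, hPQ]
    have hBD : B' = D' := by
      have e1 : (P2 ∪ B') \ P2 = B' :=
        Finset.union_sdiff_cancel_left (hd13.mono hP2s hB's)
      have e2 : (Q2 ∪ D') \ Q2 = D' :=
        Finset.union_sdiff_cancel_left (hd13.mono hQ2s hD's)
      rw [← e1, ← e2, h2, hPQ]
    simp [hPQ, hAC, hBD]

lemma count_pairs_upper (n k j : ℕ) :
    (((Finset.powersetCard (k+1) (Finset.univ : Finset (Fin n))) ×ˢ
        (Finset.powersetCard (k+1) (Finset.univ : Finset (Fin n)))).filter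
        (fun AB => (AB.1 ∩ AB.2).card = j)).card
      ≤ Nat.choose n (k+1) * 2^(k+1) * Nat.choose n (k+1-j) := by
  set P := Finset.powersetCard (k+1) (Finset.univ : Finset (Fin n)) with hP
  set T := (P.sigma fun A => A.powerset) ×ˢ
      (Finset.powersetCard (k+1-j) (Finset.univ : Finset (Fin n))) with hT
  have hcardT : T.card = Nat.choose n (k+1) * 2^(k+1) * Nat.choose n (k+1-j) := by
    rw [hT, Finset.card_product, Finset.card_sigma]
    have : ∀ A ∈ P, A.powerset.card = 2^(k+1) := by
      intro A hA
      rw [Finset.card_powerset, (Finset.mem_powersetCard_univ.1 hA)]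
    rw [Finset.sum_congr rfl this, Finset.sum_const, smul_eq_mul,
      Finset.card_powersetCard, Finset.card_powersetCard]
    simp [Finset.card_univ]
  rw [← hcardT]
  refine Finset.card_le_card_of_injOn (fun AB => (⟨AB.1, AB.1 ∩ AB.2⟩, AB.2 \ AB.1)) ?_ ?_
  · rintro ⟨A, B⟩ hx
    simp only [Finset.mem_coe, Finset.mem_filter, Finset.mem_product] at hx
    obtain ⟨⟨hA, hB⟩, hj⟩ := hx
    have hAc : A.card = k + 1 := Finset.mem_powersetCard_univ.1 hA
    have hBc : B.card = k + 1 := Finset.mem_powersetCard_univ.1 hB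
    rw [hT]
    simp only [Finset.mem_coe, Finset.mem_product, Finset.mem_sigma, Finset.mem_powerset,
      Finset.mem_powersetCard]
    refine ⟨⟨hA, Finset.inter_subset_left⟩, Finset.subset_univ _, ?_⟩
    have := Finset.card_sdiff_add_card_inter B A
    rw [Finset.inter_comm B A] at this
    omega
  · rintro ⟨A, B⟩ hx ⟨A', B'⟩ hy hxy
    have h1 : A = A' := congrArg (fun z => z.1.1) hxy
    subst h1
    have h2' : A ∩ B = A ∩ B' := congrArg (fun z => z.1.2) hxy
    have h3 : B \ A = B' \ A := congrArg (fun z => z.2) hxy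
    have hB : B = B' := by
      have e1 : A ∩ B ∪ B \ A = B := by
        ext a; simp only [Finset.mem_union, Finset.mem_sdiff, Finset.mem_inter]; tauto
      have e2 : A ∩ B' ∪ B' \ A = B' := by
        ext a; simp only [Finset.mem_union, Finset.mem_sdiff, Finset.mem_inter]; tauto
      rw [← e1, ← e2, h2', h3]
    simp [hB]

lemma exponent_ineq (k j : ℕ) (hk : 1 ≤ k) (hj : 2 ≤ j) (hjk : j ≤ k + 1) (α : ℝ)
    (hα1 : -(1 / (k:ℝ)) < α) (hα0 : α < 0) :
    α * (1 - (Nat.choose j 2 : ℝ)) ≤ (j : ℝ) - 2 := by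
  rcases eq_or_lt_of_le hj with rfl | hj3
  · norm_num
  · have hj3 : 3 ≤ j := hj3
    have hk2 : 2 ≤ k := by omega
    have hdvd : 2 ∣ j * (j - 1) := by
      have := Nat.even_mul_succ_self (j - 1)
      rw [Nat.sub_add_cancel (by omega : 1 ≤ j)] at this
      rw [mul_comm]
      exact this.two_dvd
    have h2c : 2 * Nat.choose j 2 = j * (j - 1) := by
      rw [Nat.choose_two_right, Nat.mul_div_cancel' hdvd]
    have h2cr : 2 * (Nat.choose j 2 : ℝ) = (j : ℝ) * ((j : ℝ) - 1) := by
      have : ((2 * Nat.choose j 2 : ℕ) : ℝ) = ((j * (j-1) : ℕ) : ℝ) := by exact_mod_cast h2c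
      push_cast [Nat.cast_sub (by omega : 1 ≤ j)] at this
      linarith
    have hk0 : (0:ℝ) < k := by exact_mod_cast (by omega : 0 < k)
    have hjr : (3:ℝ) ≤ (j:ℝ) := by exact_mod_cast hj3
    have hjkr : (j:ℝ) ≤ (k:ℝ) + 1 := by exact_mod_cast hjk
    have hkr : (2:ℝ) ≤ (k:ℝ) := by exact_mod_cast hk2
    have hc2 : (3:ℝ) ≤ (Nat.choose j 2 : ℝ) := by nlinarith
    have hstep2 : (Nat.choose j 2 : ℝ) - 1 ≤ (k:ℝ) * ((j:ℝ) - 2) := by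
      nlinarith [mul_le_mul_of_nonneg_left (show (j:ℝ)+1 ≤ 2*(k:ℝ) by linarith)
        (show (0:ℝ) ≤ (j:ℝ)-2 by linarith)]
    have e : (-(1/(k:ℝ))) * k = -1 := by field_simp
    have hak : (-1:ℝ) < α * k := e ▸ mul_lt_mul_of_pos_right hα1 hk0
    nlinarith [mul_le_mul_of_nonneg_left hstep2 (show (0:ℝ) ≤ -α by linarith),
      mul_le_mul_of_nonneg_right (show -(α*(k:ℝ)) ≤ 1 by linarith)
        (show (0:ℝ) ≤ (j:ℝ)-2 by linarith)]

lemma key_pow_ineq (k j : ℕ) (hk : 1 ≤ k) (hj : 2 ≤ j) (hjk : j ≤ k+1)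
    (α : ℝ) (hα1 : -(1/(k:ℝ)) < α) (hα0 : α < 0) (n : ℕ) (hn : 1 ≤ n) :
    (n:ℝ)^(k+1) * (n:ℝ)^(k+1-j) * ((n:ℝ)^α)^(2*Nat.choose (k+1) 2 - Nat.choose j 2)
      ≤ (n:ℝ)^(2*k) * ((n:ℝ)^α)^(2*Nat.choose (k+1) 2 - 1) := by
  set m := Nat.choose (k+1) 2 with hm
  have hn0 : (0:ℝ) < (n:ℝ) := by exact_mod_cast (by omega : 0 < n)
  have hn1 : (1:ℝ) ≤ (n:ℝ) := by exact_mod_cast hn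
  have hc2m : Nat.choose j 2 ≤ m := Nat.choose_le_choose 2 hjk
  have hc21 : 1 ≤ Nat.choose j 2 := by
    calc 1 = Nat.choose 2 2 := by norm_num
    _ ≤ Nat.choose j 2 := Nat.choose_le_choose 2 hj
  have hm1 : 1 ≤ m := le_trans hc21 hc2m
  have key : ∀ a : ℕ, ((n:ℝ)^α)^a = (n:ℝ) ^ (α * a) := by
    intro a
    rw [← Real.rpow_natCast ((n:ℝ)^α) a, ← Real.rpow_mul (le_of_lt hn0)]
  have keyn : ∀ a : ℕ, (n:ℝ)^a = (n:ℝ) ^ ((a:ℕ):ℝ) := by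
    intro a; rw [Real.rpow_natCast]
  rw [key, key, keyn (k+1), keyn (k+1-j), keyn (2*k),
    ← Real.rpow_add hn0, ← Real.rpow_add hn0, ← Real.rpow_add hn0]
  apply Real.rpow_le_rpow_of_exponent_le hn1
  rw [Nat.cast_sub hjk, Nat.cast_sub (le_trans hc2m (by omega)), Nat.cast_sub (le_trans hm1 (by omega))]
  push_cast
  have := exponent_ineq k j hk hj hjk α hα1 hα0
  nlinarith [this]

lemma staticVar_fiber (n k : ℕ) (p : ℝ) :
    staticVar n p (cliqueCountR n k)
      = ∑ j ∈ Finset.range (k+2),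
          ((((Finset.powersetCard (k+1) (Finset.univ : Finset (Fin n))) ×ˢ
             (Finset.powersetCard (k+1) (Finset.univ : Finset (Fin n)))).filter
             (fun AB => (AB.1 ∩ AB.2).card = j)).card : ℝ)
            * (p ^ (2 * Nat.choose (k+1) 2 - Nat.choose j 2) - p ^ (2 * Nat.choose (k+1) 2)) := by
  rw [staticVar_cliqueCount]
  simp_rw [← pow_add, ← two_mul]
  rw [← Finset.sum_product']
  set P := Finset.powersetCard (k+1) (Finset.univ : Finset (Fin n)) with hP
  have hmaps : ∀ AB ∈ P ×ˢ P, (AB.1 ∩ AB.2).card ∈ Finset.range (k+2) := by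
    rintro ⟨A, B⟩ hAB
    rw [Finset.mem_product] at hAB
    have hAc : A.card = k + 1 := Finset.mem_powersetCard_univ.1 hAB.1
    have : (A ∩ B).card ≤ k + 1 := by
      rw [← hAc]; exact Finset.card_le_card Finset.inter_subset_left
    rw [Finset.mem_range]
    show (A ∩ B).card < k + 2
    omega
  rw [← Finset.sum_fiberwise_of_maps_to hmaps]
  refine Finset.sum_congr rfl fun j _ => ?_
  rw [Finset.sum_congr rfl (fun AB hAB => ?_), Finset.sum_const, nsmul_eq_mul]
  rw [Finset.mem_filter] at hAB
  rw [hAB.2]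


/-- `Var[f_{n,k}] = Θ(n^{2k} p^{2C(k+1,2)-1})` when `p = n^α`
with `α ∈ (-1/k, -1/(k+1))`. -/
theorem variance_cliqueCount_theta (k : ℕ) (hk : 1 ≤ k) (α : ℝ)
    (hα : α ∈ Set.Ioo (-(1 / (k : ℝ))) (-(1 / ((k : ℝ) + 1)))) :
    ∃ c > (0 : ℝ), ∃ C > (0 : ℝ), ∃ N : ℕ, ∀ n ≥ N,
      c * (n : ℝ) ^ (2 * k) * ((n : ℝ) ^ α) ^ (2 * Nat.choose (k + 1) 2 - 1) ≤
          staticVar n ((n : ℝ) ^ α) (cliqueCountR n k) ∧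
        staticVar n ((n : ℝ) ^ α) (cliqueCountR n k) ≤
          C * (n : ℝ) ^ (2 * k) * ((n : ℝ) ^ α) ^ (2 * Nat.choose (k + 1) 2 - 1) := by
  obtain ⟨hα1, hα2⟩ := hα
  have hα0 : α < 0 := by
    have h : (0:ℝ) < 1/((k:ℝ)+1) := by positivity
    linarith
  have htend : Tendsto (fun n : ℕ => ((n:ℝ))^α) atTop (nhds 0) := by
    have h1 : Tendsto (fun x : ℝ => x ^ α) atTop (nhds 0) := by
      have h2 := tendsto_rpow_neg_atTop (show 0 < -α by linarith)
      simpa using h2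
    exact h1.comp tendsto_natCast_atTop_atTop
  have hev : ∀ᶠ n : ℕ in atTop, ((n:ℝ))^α < 1/2 := htend.eventually_lt_const (by norm_num)
  obtain ⟨N₁, hN₁⟩ := Filter.eventually_atTop.1 hev
  set m := Nat.choose (k+1) 2 with hm
  have hm1 : 1 ≤ m := Nat.choose_pos (by omega)
  refine ⟨1/(4 * ((Nat.factorial (k-1) : ℝ))^2 * 12^(2*k)), by positivity,
    ((k:ℝ)+2) * 2^(k+1), by positivity, max N₁ (4*k+12), fun n hn => ?_⟩
  have hnN₁ : N₁ ≤ n := le_trans (le_max_left _ _) hn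
  have hn12 : 4*k+12 ≤ n := le_trans (le_max_right _ _) hn
  have hn0 : (0:ℝ) < (n:ℝ) := by exact_mod_cast (by omega : 0 < n)
  have hn1r : (1:ℝ) ≤ (n:ℝ) := by exact_mod_cast (by omega : 1 ≤ n)
  set p := (n:ℝ)^α with hp
  have hp0 : 0 < p := Real.rpow_pos_of_pos hn0 α
  have hp1 : p ≤ 1 := Real.rpow_le_one_of_one_le_of_nonpos hn1r (le_of_lt hα0)
  have hphalf : p < 1/2 := hN₁ n hnN₁
  have hnonneg : ∀ j : ℕ, 0 ≤ p ^ (2*m - Nat.choose j 2) - p ^ (2*m) := by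
    intro j
    have h := pow_le_pow_of_le_one (le_of_lt hp0) hp1 (Nat.sub_le (2*m) (Nat.choose j 2))
    linarith
  set Nj : ℕ → ℕ := fun j =>
    ((((Finset.powersetCard (k+1) (Finset.univ : Finset (Fin n))) ×ˢ
       (Finset.powersetCard (k+1) (Finset.univ : Finset (Fin n)))).filter
       (fun AB => (AB.1 ∩ AB.2).card = j)).card) with hNj
  have hfiber : staticVar n p (cliqueCountR n k)
      = ∑ j ∈ Finset.range (k+2), (Nj j : ℝ) * (p ^ (2*m - Nat.choose j 2) - p ^ (2*m)) :=
    staticVar_fiber n k p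
  constructor
  · -- lower bound
    rw [hfiber]
    have h2mem : 2 ∈ Finset.range (k+2) := by
      rw [Finset.mem_range]; omega
    have hterms : ∀ j ∈ Finset.range (k+2),
        0 ≤ (Nj j : ℝ) * (p ^ (2*m - Nat.choose j 2) - p ^ (2*m)) := fun j _ =>
      mul_nonneg (Nat.cast_nonneg _) (hnonneg j)
    refine le_trans ?_ (Finset.single_le_sum hterms h2mem)
    rw [show Nat.choose 2 2 = 1 from Nat.choose_self 2]
    -- counting lower bound
    set q := n / 3 with hq
    set f := (Nat.factorial (k-1) : ℝ) with hf
    have hf0 : 0 < f := by rw [hf]; exact_mod_cast Nat.factorial_pos _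
    have hqn1 : n ≤ 12 * (q + 1 - 2) := by omega
    have hqnk : n ≤ 12 * (q + 1 - (k-1)) := by omega
    have hb2 : (n:ℝ)/12 ≤ ((q + 1 - 2 : ℕ) : ℝ) := by
      rw [div_le_iff₀ (by norm_num : (0:ℝ) < 12)]
      calc (n:ℝ) ≤ ((12 * (q + 1 - 2) : ℕ) : ℝ) := by exact_mod_cast hqn1
      _ = ((q + 1 - 2 : ℕ) : ℝ) * 12 := by push_cast; ring
    have hbk : (n:ℝ)/12 ≤ ((q + 1 - (k-1) : ℕ) : ℝ) := by
      rw [div_le_iff₀ (by norm_num : (0:ℝ) < 12)]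
      calc (n:ℝ) ≤ ((12 * (q + 1 - (k-1)) : ℕ) : ℝ) := by exact_mod_cast hqnk
      _ = ((q + 1 - (k-1) : ℕ) : ℝ) * 12 := by push_cast; ring
    have hn120 : (0:ℝ) ≤ (n:ℝ)/12 := by positivity
    have hch2 : ((n:ℝ)/12)^2 / 2 ≤ (Nat.choose q 2 : ℝ) := by
      have t1 := Nat.pow_le_choose 2 q (α := ℝ)
      have t2 : ((n:ℝ)/12)^2 ≤ (((q + 1 - 2 : ℕ) : ℝ))^2 := by
        exact pow_le_pow_left₀ hn120 hb2 2
      have : ((2:ℕ).factorial : ℝ) = 2 := by norm_num [Nat.factorial]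
      rw [this] at t1
      calc ((n:ℝ)/12)^2 / 2 ≤ (((q + 1 - 2 : ℕ) : ℝ))^2 / 2 := by linarith
      _ ≤ (Nat.choose q 2 : ℝ) := t1
    have hchk : ((n:ℝ)/12)^(k-1) / f ≤ (Nat.choose q (k-1) : ℝ) := by
      have t1 := Nat.pow_le_choose (k-1) q (α := ℝ)
      have t2 : ((n:ℝ)/12)^(k-1) ≤ (((q + 1 - (k-1) : ℕ) : ℝ))^(k-1) :=
        pow_le_pow_left₀ hn120 hbk (k-1)
      calc ((n:ℝ)/12)^(k-1) / f ≤ (((q + 1 - (k-1) : ℕ) : ℝ))^(k-1) / f := by gcongr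
      _ ≤ (Nat.choose q (k-1) : ℝ) := by rw [hf]; exact t1
    have hcount : (Nat.choose q 2 * Nat.choose q (k-1) * Nat.choose q (k-1) : ℝ) ≤ (Nj 2 : ℝ) := by
      exact_mod_cast count_pairs_lower n k hk
    have hN2 : ((n:ℝ)/12)^(2*k) / (2 * f^2) ≤ (Nj 2 : ℝ) := by
      calc ((n:ℝ)/12)^(2*k) / (2 * f^2)
          = (((n:ℝ)/12)^2/2) * (((n:ℝ)/12)^(k-1)/f) * (((n:ℝ)/12)^(k-1)/f) := by
            rw [show 2*k = 2 + ((k-1) + (k-1)) from by omega, pow_add, pow_add]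
            field_simp
      _ ≤ (Nat.choose q 2 : ℝ) * (Nat.choose q (k-1) : ℝ) * (Nat.choose q (k-1) : ℝ) := by
            have h1 : 0 ≤ ((n:ℝ)/12)^(k-1)/f := by positivity
            have h2 : 0 ≤ ((n:ℝ)/12)^2/2 := by positivity
            gcongr
      _ ≤ (Nj 2 : ℝ) := by push_cast at hcount ⊢; linarith
    have hpterm : p^(2*m-1) / 2 ≤ p^(2*m-1) - p^(2*m) := by
      have hsplit : p^(2*m) = p^(2*m-1) * p := by
        rw [← pow_succ]
        congr 1
        omega
      have hpow0 : 0 < p^(2*m-1) := pow_pos hp0 _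
      rw [hsplit]
      nlinarith
    calc 1/(4 * f^2 * 12^(2*k)) * (n:ℝ)^(2*k) * p^(2*m-1)
        = (((n:ℝ)/12)^(2*k) / (2 * f^2)) * (p^(2*m-1)/2) := by
          rw [div_pow]
          field_simp
          ring
    _ ≤ (Nj 2 : ℝ) * (p^(2*m-1) - p^(2*m)) := by
          apply mul_le_mul hN2 hpterm (by positivity) (Nat.cast_nonneg _)
  · -- upper bound
    rw [hfiber]
    have hbound : ∀ j ∈ Finset.range (k+2),
        (Nj j : ℝ) * (p ^ (2*m - Nat.choose j 2) - p ^ (2*m))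
          ≤ 2^(k+1) * ((n:ℝ)^(2*k) * p^(2*m-1)) := by
      intro j hj
      rcases lt_or_ge j 2 with hj2 | hj2
      · have hc0 : Nat.choose j 2 = 0 := Nat.choose_eq_zero_of_lt hj2
        rw [hc0, Nat.sub_zero, sub_self, mul_zero]
        positivity
      · have hjk : j ≤ k+1 := by rw [Finset.mem_range] at hj; omega
        have hNle : (Nj j : ℝ) ≤ (n:ℝ)^(k+1) * 2^(k+1) * (n:ℝ)^(k+1-j) := by
          calc (Nj j : ℝ) ≤ ((Nat.choose n (k+1) * 2^(k+1) * Nat.choose n (k+1-j) : ℕ) : ℝ) := by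
                exact_mod_cast count_pairs_upper n k j
          _ ≤ (n:ℝ)^(k+1) * 2^(k+1) * (n:ℝ)^(k+1-j) := by
                push_cast
                have c1 : (Nat.choose n (k+1) : ℝ) ≤ (n:ℝ)^(k+1) := by
                  exact_mod_cast Nat.choose_le_pow n (k+1)
                have c2 : (Nat.choose n (k+1-j) : ℝ) ≤ (n:ℝ)^(k+1-j) := by
                  exact_mod_cast Nat.choose_le_pow n (k+1-j)
                have h2p : (0:ℝ) ≤ 2^(k+1) := by positivity
                have := mul_le_mul c1 c2 (Nat.cast_nonneg _) (by positivity)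
                nlinarith [this, Nat.cast_nonneg (α := ℝ) (Nat.choose n (k+1-j))]
        calc (Nj j : ℝ) * (p ^ (2*m - Nat.choose j 2) - p ^ (2*m))
            ≤ (Nj j : ℝ) * p ^ (2*m - Nat.choose j 2) := by
              have := pow_nonneg (le_of_lt hp0) (2*m)
              have := Nat.cast_nonneg (α := ℝ) (Nj j)
              nlinarith
        _ ≤ ((n:ℝ)^(k+1) * 2^(k+1) * (n:ℝ)^(k+1-j)) * p ^ (2*m - Nat.choose j 2) := by
              exact mul_le_mul_of_nonneg_right hNle (pow_nonneg (le_of_lt hp0) _)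
        _ = 2^(k+1) * ((n:ℝ)^(k+1) * (n:ℝ)^(k+1-j) * p ^ (2*m - Nat.choose j 2)) := by ring
        _ ≤ 2^(k+1) * ((n:ℝ)^(2*k) * p^(2*m-1)) := by
              have hkey := key_pow_ineq k j hk hj2 hjk α hα1 hα0 n (by omega)
              rw [← hp, ← hm] at hkey
              exact mul_le_mul_of_nonneg_left hkey (by positivity)
    calc ∑ j ∈ Finset.range (k+2), (Nj j : ℝ) * (p ^ (2*m - Nat.choose j 2) - p ^ (2*m))
        ≤ ∑ _j ∈ Finset.range (k+2), 2^(k+1) * ((n:ℝ)^(2*k) * p^(2*m-1)) :=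
          Finset.sum_le_sum hbound
    _ = ((k:ℝ)+2) * 2^(k+1) * ((n:ℝ)^(2*k) * p^(2*m-1)) := by
          rw [Finset.sum_const, Finset.card_range, nsmul_eq_mul]
          push_cast
          ring
    _ = ((k:ℝ)+2) * 2^(k+1) * (n:ℝ)^(2*k) * p^(2*m-1) := by ring


end
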